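/- arXiv:1312.2387 — 10 statements merged into one kernel-verified Lean document; each statement's English description precedes it below -/
import Mathlib

section
/- Let F, K ∈ Matrix (Fin 3) (Fin 2) ℝ, let R ∈ Matrix (Fin 3) (Fin 3) ℝ be a special orthogonal matrix (RᵀR = 1, det R = 1) satisfying R e₃ = e₃, and let t ∈ ℝ². Then the three quantities Fᵀ F, Fᵀ e₃ and Fᵀ C K are invariant under the drilling-rotation action: (R F)ᵀ (R F) = Fᵀ F, (R F)ᵀ e₃ = Fᵀ e₃, and (R F)ᵀ C (R K + e₃ tᵀ) = Fᵀ C K. Consequently, any strain energy of the form W(F, K) = Ŵ(Fᵀ F, Fᵀ e₃, Fᵀ C K) satisfies W(R F, R K + e₃ tᵀ) = W(F, K). (This is the 'if' direction of the paper's representation theorem for shells without drilling rotations, expressed in a fixed material frame.) -/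
open Matrix

/-- The unit normal `e₃` in the fixed material frame. -/
def e3 : Fin 3 → ℝ := ![0, 0, 1]

/-- The alternator matrix `C` of the map `v ↦ e₃ × v`. -/
def altC : Matrix (Fin 3) (Fin 3) ℝ := !![0, -1, 0; 1, 0, 0; 0, 0, 0]

/-- invariance of `FᵀF`, `Fᵀe₃` and `FᵀCK` under superposed drilling
rotations, and consequently invariance of any energy `W(F,K) = Whot(FᵀF, Fᵀe₃, FᵀCK)`. -/
theorem drilling_invariants_if_direction
    (F K : Matrix (Fin 3) (Fin 2) ℝ)
    (R : Matrix (Fin 3) (Fin 3) ℝ) (hR : Rᵀ * R = 1) (hdet : R.det = 1)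
    (hRe3 : R.mulVec e3 = e3) (t : Fin 2 → ℝ)
    (W : Matrix (Fin 3) (Fin 2) ℝ → Matrix (Fin 3) (Fin 2) ℝ → ℝ)
    (Whot : Matrix (Fin 2) (Fin 2) ℝ → (Fin 2 → ℝ) → Matrix (Fin 2) (Fin 2) ℝ → ℝ)
    (hW : ∀ F' K' : Matrix (Fin 3) (Fin 2) ℝ,
      W F' K' = Whot (F'ᵀ * F') (F'ᵀ.mulVec e3) (F'ᵀ * altC * K')) :
    (R * F)ᵀ * (R * F) = Fᵀ * F ∧
    (R * F)ᵀ.mulVec e3 = Fᵀ.mulVec e3 ∧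
    (R * F)ᵀ * altC * (R * K + vecMulVec e3 t) = Fᵀ * altC * K ∧
    W (R * F) (R * K + vecMulVec e3 t) = W F K := by
  -- column 3 of R is e3
  have hcol : ∀ i, R i 2 = e3 i := by
    intro i
    have := congrFun hRe3 i
    simpa [Matrix.mulVec, dotProduct, e3, Fin.sum_univ_three] using this
  -- Rᵀ e3 = e3
  have hRTe3 : Rᵀ.mulVec e3 = e3 := by
    calc Rᵀ.mulVec e3 = Rᵀ.mulVec (R.mulVec e3) := by rw [hRe3]
    _ = (Rᵀ * R).mulVec e3 := by rw [Matrix.mulVec_mulVec]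
    _ = e3 := by rw [hR, Matrix.one_mulVec]
  -- row 3 of R is e3
  have hrow : ∀ j, R 2 j = e3 j := by
    intro j
    have := congrFun hRTe3 j
    simpa [Matrix.mulVec, dotProduct, e3, Fin.sum_univ_three, Matrix.transpose_apply] using this
  have h02 : R 0 2 = 0 := hcol 0
  have h12 : R 1 2 = 0 := hcol 1
  have h22 : R 2 2 = 1 := hcol 2
  have h20 : R 2 0 = 0 := hrow 0
  have h21 : R 2 1 = 0 := hrow 1
  -- 2x2 determinant relation
  have hdet2 : R 0 0 * R 1 1 - R 0 1 * R 1 0 = 1 := by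
    have := hdet
    rw [Matrix.det_fin_three] at this
    rw [h02, h12, h22, h20, h21] at this
    linarith [this]
  -- key conjugation identity
  have hC : Rᵀ * altC * R = altC := by
    ext i j
    fin_cases i <;> fin_cases j <;>
      simp [Matrix.mul_apply, Fin.sum_univ_three, altC, Matrix.transpose_apply,
        Matrix.vecHead, Matrix.vecTail, h02, h12, h22, h20, h21] <;> linarith [hdet2]
  -- C kills e3 tᵀ
  have hCe3 : altC * vecMulVec e3 t = 0 := by
    ext i j
    fin_cases i <;> fin_cases j <;>
      simp only [Matrix.mul_apply, Fin.sum_univ_three, vecMulVec_apply] <;>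
      simp [Matrix.mul_apply, Fin.sum_univ_three, altC, vecMulVec_apply, e3]
  have h1 : (R * F)ᵀ * (R * F) = Fᵀ * F := by
    rw [Matrix.transpose_mul, Matrix.mul_assoc, ← Matrix.mul_assoc Rᵀ, hR, Matrix.one_mul]
  have h2 : (R * F)ᵀ.mulVec e3 = Fᵀ.mulVec e3 := by
    rw [Matrix.transpose_mul, ← Matrix.mulVec_mulVec, hRTe3]
  have h3 : (R * F)ᵀ * altC * (R * K + vecMulVec e3 t) = Fᵀ * altC * K := by
    rw [Matrix.transpose_mul, Matrix.mul_add]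
    have e1 : Fᵀ * Rᵀ * altC * (R * K) = Fᵀ * altC * K := by
      conv_rhs => rw [← hC]
      simp only [Matrix.mul_assoc]
    have e2 : Fᵀ * Rᵀ * altC * vecMulVec e3 t = 0 := by
      rw [Matrix.mul_assoc, hCe3, Matrix.mul_zero]
    rw [e1, e2, add_zero]
  refine ⟨h1, h2, h3, ?_⟩
  rw [hW, hW, h1, h2, h3]
end

section
/- Let F, K, F', K' ∈ Matrix (Fin 3) (Fin 2) ℝ. Assume the orientation conditions det [F.col 0 | F.col 1 | e₃] > 0 and det [F'.col 0 | F'.col 1 | e₃] > 0 (determinants of the 3×3 matrices whose columns are the two columns of F, resp. F', together with e₃). If Fᵀ F = F'ᵀ F', Fᵀ e₃ = F'ᵀ e₃, and Fᵀ C K = F'ᵀ C K', then there exist a special orthogonal matrix R ∈ Matrix (Fin 3) (Fin 3) ℝ with R e₃ = e₃ and a vector t ∈ ℝ² such that F' = R F and K' = R K + e₃ tᵀ. (Orbit-separation lemma underlying the necessity part of the paper's representation theorem.) -/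
open Matrix

/-- The 3×3 matrix `[F.col 0 | F.col 1 | e₃]` whose columns are the two columns
of `F` together with `e₃`. -/
def aug (F : Matrix (Fin 3) (Fin 2) ℝ) : Matrix (Fin 3) (Fin 3) ℝ :=
  Matrix.of fun i j => ![F i 0, F i 1, e3 i] j

lemma aug_mulVec_e3 (F : Matrix (Fin 3) (Fin 2) ℝ) : (aug F).mulVec e3 = e3 := by
  ext i
  fin_cases i <;> simp [Matrix.mulVec, dotProduct, Fin.sum_univ_three, aug, e3]

lemma aug_mul_emb (F : Matrix (Fin 3) (Fin 2) ℝ) : (aug F) * !![(1:ℝ),0;0,1;0,0] = F := by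
  ext i j
  fin_cases i <;> fin_cases j <;>
    simp [Matrix.mul_apply, Fin.sum_univ_three, aug, e3, Matrix.vecHead, Matrix.vecTail]

lemma aug_gram (F F' : Matrix (Fin 3) (Fin 2) ℝ)
    (h1 : Fᵀ * F = F'ᵀ * F')
    (h2 : Fᵀ.mulVec e3 = F'ᵀ.mulVec e3) :
    (aug F)ᵀ * (aug F) = (aug F')ᵀ * (aug F') := by
  have e1 : ∀ i j, (Fᵀ * F) i j = (F'ᵀ * F') i j := fun i j => by rw [h1]
  have e2 : ∀ i, (Fᵀ.mulVec e3) i = (F'ᵀ.mulVec e3) i := fun i => by rw [h2]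
  simp only [Matrix.mul_apply, Matrix.transpose_apply, Matrix.mulVec, dotProduct,
    Fin.sum_univ_two, Fin.sum_univ_three, e3] at e1 e2
  norm_num [-Fin.forall_fin_two, Matrix.cons_val_two, Matrix.vecHead, Matrix.vecTail] at e2
  ext i j
  fin_cases i <;> fin_cases j <;>
    simp [Matrix.mul_apply, Matrix.transpose_apply, Fin.sum_univ_three, aug, e3] <;>
    linarith [e1 0 0, e1 0 1, e1 1 0, e1 1 1, e2 0, e2 1]

/-- orbit separation.  If two orientation-positive configurations share
the invariants `FᵀF`, `Fᵀe₃` and `FᵀCK`, they are related by a superposed drilling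
rotation. -/
theorem drilling_orbit_separation
    (F K F' K' : Matrix (Fin 3) (Fin 2) ℝ)
    (hor : 0 < (aug F).det) (hor' : 0 < (aug F').det)
    (h1 : Fᵀ * F = F'ᵀ * F')
    (h2 : Fᵀ.mulVec e3 = F'ᵀ.mulVec e3)
    (h3 : Fᵀ * altC * K = F'ᵀ * altC * K') :
    ∃ (R : Matrix (Fin 3) (Fin 3) ℝ) (t : Fin 2 → ℝ),
      Rᵀ * R = 1 ∧ R.det = 1 ∧ R.mulVec e3 = e3 ∧
      F' = R * F ∧ K' = R * K + vecMulVec e3 t := by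
  set A := aug F with hAdef
  set A' := aug F' with hA'def
  have hdA : IsUnit A.det := (ne_of_gt hor).isUnit
  have hdA' : IsUnit A'.det := (ne_of_gt hor').isUnit
  have hAA : Aᵀ * A = A'ᵀ * A' := aug_gram F F' h1 h2
  set R := A' * A⁻¹ with hRdef
  have hAinv : A * A⁻¹ = 1 := Matrix.mul_nonsing_inv A hdA
  have hinvA : A⁻¹ * A = 1 := Matrix.nonsing_inv_mul A hdA
  -- orthogonality
  have hRtR : Rᵀ * R = 1 := by
    have step : Rᵀ * R = A⁻¹ᵀ * ((A'ᵀ * A') * A⁻¹) := by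
      rw [hRdef, Matrix.transpose_mul]
      simp only [Matrix.mul_assoc]
    rw [step, ← hAA, Matrix.transpose_nonsing_inv]
    calc Aᵀ⁻¹ * ((Aᵀ * A) * A⁻¹) = (Aᵀ⁻¹ * Aᵀ) * (A * A⁻¹) := by
          simp only [Matrix.mul_assoc]
      _ = 1 := by
          rw [Matrix.nonsing_inv_mul Aᵀ (by rwa [Matrix.det_transpose]), hAinv, Matrix.one_mul]
  have hRRt : R * Rᵀ = 1 := mul_eq_one_comm.mp hRtR
  -- determinant
  have hdetR : R.det = 1 := by
    have hpos : 0 < R.det := by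
      rw [hRdef, Matrix.det_mul, Matrix.det_nonsing_inv, Ring.inverse_eq_inv]
      exact mul_pos hor' (inv_pos.mpr hor)
    have hsq : R.det * R.det = 1 := by
      have := congrArg Matrix.det hRtR
      rwa [Matrix.det_mul, Matrix.det_transpose, Matrix.det_one] at this
    nlinarith
  -- fixes e3
  have hAe3 : A.mulVec e3 = e3 := aug_mulVec_e3 F
  have hA'e3 : A'.mulVec e3 = e3 := aug_mulVec_e3 F'
  have hAinve3 : A⁻¹.mulVec e3 = e3 := by
    have h := Matrix.mulVec_mulVec e3 A⁻¹ A
    rw [hinvA, Matrix.one_mulVec] at h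
    calc A⁻¹.mulVec e3 = A⁻¹.mulVec (A.mulVec e3) := by rw [hAe3]
      _ = e3 := h
  have hRe3 : R.mulVec e3 = e3 := by
    rw [hRdef, ← Matrix.mulVec_mulVec, hAinve3, hA'e3]
  -- F' = R F
  have hF'RF : F' = R * F := by
    have h5 : A * !![(1:ℝ),0;0,1;0,0] = F := aug_mul_emb F
    have h6 : A' * !![(1:ℝ),0;0,1;0,0] = F' := aug_mul_emb F'
    calc F' = A' * !![(1:ℝ),0;0,1;0,0] := h6.symm
      _ = A' * (A⁻¹ * (A * !![(1:ℝ),0;0,1;0,0])) := by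
          rw [← Matrix.mul_assoc A⁻¹ A _, hinvA, Matrix.one_mul]
      _ = R * F := by rw [h5, hRdef, Matrix.mul_assoc]
  have hRte3 : Rᵀ.mulVec e3 = e3 := by
    conv_lhs => rw [← hRe3]
    rw [Matrix.mulVec_mulVec, hRtR, Matrix.one_mulVec]
  clear_value R
  clear hRdef
  -- entries of R
  have hcol : ∀ i, R i 2 = e3 i := by
    intro i
    have := congrFun hRe3 i
    simpa [Matrix.mulVec, dotProduct, Fin.sum_univ_three, e3] using this
  have hrow : ∀ i, R 2 i = e3 i := by
    intro i
    have := congrFun hRte3 i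
    simpa [Matrix.mulVec, dotProduct, Fin.sum_univ_three, e3,
      Matrix.transpose_apply] using this
  have hR02 : R 0 2 = 0 := by simpa [e3] using hcol 0
  have hR12 : R 1 2 = 0 := by simpa [e3] using hcol 1
  have hR20 : R 2 0 = 0 := by simpa [e3] using hrow 0
  have hR21 : R 2 1 = 0 := by simpa [e3] using hrow 1
  have hR22 : R 2 2 = 1 := by simpa [e3] using hrow 2
  have h00 : R 0 0 * R 0 0 + R 1 0 * R 1 0 = 1 := by
    have := congrFun (congrFun hRtR 0) 0
    simp only [Matrix.mul_apply, Matrix.transpose_apply, Fin.sum_univ_three,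
      Matrix.one_apply_eq, hR20] at this
    linarith
  have h01 : R 0 0 * R 0 1 + R 1 0 * R 1 1 = 0 := by
    have := congrFun (congrFun hRtR 0) 1
    simp only [Matrix.mul_apply, Matrix.transpose_apply, Fin.sum_univ_three, hR20, hR21] at this
    rw [Matrix.one_apply_ne (by decide)] at this
    linarith
  have hdet3 : R 0 0 * R 1 1 - R 0 1 * R 1 0 = 1 := by
    have hh := hdetR
    rw [Matrix.det_fin_three, hR20, hR21, hR22, hR02, hR12] at hh
    linarith [hh]
  have hd : R 1 1 = R 0 0 := by
    linear_combination R 0 0 * hdet3 + R 1 0 * h01 - R 1 1 * h00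
  have hb : R 0 1 = -(R 1 0) := by
    linear_combination (-(R 1 0)) * hdet3 + R 0 0 * h01 - R 0 1 * h00
  -- commutation with altC
  have hcomm : Rᵀ * altC = altC * Rᵀ := by
    ext i j
    fin_cases i <;> fin_cases j <;>
      simp [Matrix.mul_apply, Matrix.transpose_apply, Fin.sum_univ_three, altC,
        Matrix.vecHead, Matrix.vecTail, hR02, hR12, hR20, hR21, hR22, hd, hb]
  -- the K equation
  set D := K - Rᵀ * K' with hDdef
  clear_value D
  have hFCD : Fᵀ * altC * D = 0 := by
    have hF't : F'ᵀ = Fᵀ * Rᵀ := by rw [hF'RF, Matrix.transpose_mul]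
    rw [hDdef, Matrix.mul_sub, h3, hF't]
    rw [Matrix.mul_assoc Fᵀ Rᵀ altC, hcomm, ← Matrix.mul_assoc,
      Matrix.mul_assoc (Fᵀ * altC) Rᵀ K']
    exact sub_self _
  have hACD : Aᵀ * (altC * D) = 0 := by
    have hFCD' : Fᵀ * (altC * D) = 0 := by rw [← Matrix.mul_assoc]; exact hFCD
    have eF : ∀ i j, (Fᵀ * (altC * D)) i j = 0 := fun i j => by rw [hFCD']; rfl
    simp only [Matrix.mul_apply, Matrix.transpose_apply, Fin.sum_univ_three] at eF
    norm_num [altC, Matrix.vecHead, Matrix.vecTail, -Fin.forall_fin_two, Matrix.cons_val_two] at eF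
    have hX2 : ∀ j, (altC * D) 2 j = 0 := by
      intro j
      simp [Matrix.mul_apply, Fin.sum_univ_three, altC]
    ext i j
    rw [hAdef]
    fin_cases i <;>
      simp [Matrix.mul_apply, Matrix.transpose_apply, Fin.sum_univ_three, aug, e3, altC,
        Matrix.vecMul, dotProduct, Matrix.vecHead, Matrix.vecTail] <;>
      linarith [eF 0 j, eF 1 j]
  have hCD : altC * D = 0 := by
    have hAt : IsUnit Aᵀ.det := by rw [Matrix.det_transpose]; exact hdA
    calc altC * D = (Aᵀ⁻¹ * Aᵀ) * (altC * D) := by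
          rw [Matrix.nonsing_inv_mul _ hAt, Matrix.one_mul]
      _ = Aᵀ⁻¹ * (Aᵀ * (altC * D)) := by rw [Matrix.mul_assoc]
      _ = 0 := by rw [hACD, Matrix.mul_zero]
  have hD0 : ∀ j, D 0 j = 0 := by
    intro j
    have := congrFun (congrFun hCD 1) j
    simpa [Matrix.mul_apply, Fin.sum_univ_three, altC] using this
  have hD1 : ∀ j, D 1 j = 0 := by
    intro j
    have := congrFun (congrFun hCD 0) j
    have h' : -D 1 j = 0 := by
      simpa [Matrix.mul_apply, Fin.sum_univ_three, altC] using this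
    linarith
  refine ⟨R, fun j => -(D 2 j), hRtR, hdetR, hRe3, hF'RF, ?_⟩
  have hKD : K - D = Rᵀ * K' := by rw [hDdef, sub_sub_cancel]
  have hK' : K' = R * K - R * D := by
    calc K' = (R * Rᵀ) * K' := by rw [hRRt, Matrix.one_mul]
      _ = R * (Rᵀ * K') := by rw [Matrix.mul_assoc]
      _ = R * (K - D) := by rw [hKD]
      _ = R * K - R * D := by rw [Matrix.mul_sub]
  rw [hK']
  ext i j
  have hRD : (R * D) i j = R i 2 * D 2 j := by
    rw [Matrix.mul_apply, Fin.sum_univ_three, hD0 j, hD1 j]; ring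
  simp only [Matrix.sub_apply, Matrix.add_apply, Matrix.vecMulVec_apply, hRD, hcol i]
  ring
end

section
/- Let W : Matrix (Fin 3) (Fin 2) ℝ × Matrix (Fin 3) (Fin 2) ℝ → ℝ be invariant under superposed drilling rotations, i.e. W(R F, R K + e₃ tᵀ) = W(F, K) for every special orthogonal R with R e₃ = e₃, every t ∈ ℝ², and all F, K. Then on the set of orientation-positive configurations, W depends only on the invariants (Fᵀ F, Fᵀ e₃, Fᵀ C K): for all F, K, F', K' with det [F.col 0 | F.col 1 | e₃] > 0, det [F'.col 0 | F'.col 1 | e₃] > 0, Fᵀ F = F'ᵀ F', Fᵀ e₃ = F'ᵀ e₃ and Fᵀ C K = F'ᵀ C K', one has W(F, K) = W(F', K'). (This is the necessity part of the paper's representation theorem: the strain energy of a shell without drilling rotations can be represented as W = Ŵ(FᵀF, Fᵀd₃, FᵀGrad_s d₃).) -/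
open Matrix

/-- A rotation fixing `e3` commutes with the alternator `altC`. -/
lemma rot_comm_altC (R : Matrix (Fin 3) (Fin 3) ℝ) (ho : Rᵀ * R = 1) (hd : R.det = 1)
    (h1 : ∀ i, R i 2 = e3 i) (h2 : ∀ j, R 2 j = e3 j) :
    R * altC = altC * R := by
  have hz1 := h1 0; have hz2 := h1 1; have hz3 := h2 0; have hz4 := h2 1; have hz5 := h1 2
  simp [e3] at hz1 hz2 hz3 hz4 hz5
  have e00 := congrFun (congrFun ho 0) 0
  have e01 := congrFun (congrFun ho 0) 1
  simp [Matrix.mul_apply, Fin.sum_univ_three, Matrix.one_apply, hz3, hz4] at e00 e01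
  rw [Matrix.det_fin_three, hz1, hz2, hz3, hz4, hz5] at hd
  ring_nf at hd
  ext i j
  fin_cases i <;> fin_cases j <;>
    simp [Matrix.mul_apply, Fin.sum_univ_three, altC, Matrix.vecHead, Matrix.vecTail,
      hz1, hz2, hz3, hz4, hz5] <;>
    first
      | linear_combination (-(R 0 0))*hd - R 1 0 * e01 + R 1 1 * e00
      | linear_combination R 0 0 * hd + R 1 0 * e01 - R 1 1 * e00
      | linear_combination R 0 0 * e01 - R 1 0 * hd - R 0 1 * e00
      | linear_combination (-(R 0 0)) * e01 + R 1 0 * hd + R 0 1 * e00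

/-- necessity part of the representation theorem.  A strain energy
invariant under superposed drilling rotations depends, on orientation-positive
configurations, only on the invariants `(FᵀF, Fᵀe₃, FᵀCK)`. -/
theorem drilling_invariant_energy_representation
    (W : Matrix (Fin 3) (Fin 2) ℝ × Matrix (Fin 3) (Fin 2) ℝ → ℝ)
    (hinv : ∀ (R : Matrix (Fin 3) (Fin 3) ℝ) (t : Fin 2 → ℝ)
      (F K : Matrix (Fin 3) (Fin 2) ℝ),
      Rᵀ * R = 1 → R.det = 1 → R.mulVec e3 = e3 →
      W (R * F, R * K + vecMulVec e3 t) = W (F, K)) :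
    ∀ (F K F' K' : Matrix (Fin 3) (Fin 2) ℝ),
      0 < (aug F).det → 0 < (aug F').det →
      Fᵀ * F = F'ᵀ * F' →
      Fᵀ.mulVec e3 = F'ᵀ.mulVec e3 →
      Fᵀ * altC * K = F'ᵀ * altC * K' →
      W (F, K) = W (F', K') := by
  intro F K F' K' hdF hdF' hFF hFe hFK
  set A := aug F with hAdef
  set A' := aug F' with hA'def
  -- Gram matrices of the augmented matrices agree
  have hG : Aᵀ * A = A'ᵀ * A' := by
    have h1 := fun i j => congrFun (congrFun hFF i) j
    have h2 := fun i => congrFun hFe i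
    simp only [Matrix.mul_apply, Matrix.transpose_apply, Fin.sum_univ_three] at h1
    simp [Matrix.mulVec, dotProduct, Fin.sum_univ_three, e3] at h2
    ext i j
    fin_cases i <;> fin_cases j <;>
      simp [hAdef, hA'def, Matrix.mul_apply, aug, e3, Fin.sum_univ_three,
        Matrix.transpose_apply] <;>
      linarith [h1 0 0, h1 0 1, h1 1 0, h1 1 1, h2.1, h2.2]
  have hAunit : IsUnit A.det := (isUnit_iff_ne_zero).mpr (ne_of_gt hdF)
  have hAtunit : IsUnit Aᵀ.det := by rwa [Matrix.det_transpose]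
  -- the two determinants agree
  have hdeq : A.det = A'.det := by
    have h := congrArg Matrix.det hG
    rw [Matrix.det_mul, Matrix.det_mul, Matrix.det_transpose, Matrix.det_transpose] at h
    have hfac : (A.det - A'.det) * (A.det + A'.det) = 0 := by linear_combination h
    rcases mul_eq_zero.mp hfac with h' | h'
    · linarith
    · linarith
  -- the connecting rotation
  set R := A' * A⁻¹ with hRdef
  have hRA : R * A = A' := by
    rw [hRdef, Matrix.mul_assoc, Matrix.nonsing_inv_mul A hAunit, Matrix.mul_one]
  have ho : Rᵀ * R = 1 := by
    rw [hRdef, Matrix.transpose_mul, Matrix.transpose_nonsing_inv]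
    calc Aᵀ⁻¹ * A'ᵀ * (A' * A⁻¹) = Aᵀ⁻¹ * (A'ᵀ * A') * A⁻¹ := by
          rw [Matrix.mul_assoc, Matrix.mul_assoc, Matrix.mul_assoc]
      _ = Aᵀ⁻¹ * (Aᵀ * A) * A⁻¹ := by rw [hG]
      _ = Aᵀ⁻¹ * Aᵀ * (A * A⁻¹) := by rw [Matrix.mul_assoc, Matrix.mul_assoc, Matrix.mul_assoc]
      _ = 1 := by
          rw [Matrix.nonsing_inv_mul Aᵀ hAtunit, Matrix.mul_nonsing_inv A hAunit, Matrix.one_mul]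
  have hdR : R.det = 1 := by
    rw [hRdef, Matrix.det_mul, Matrix.det_nonsing_inv, ← hdeq]
    field_simp
    exact Ring.mul_inverse_cancel _ hAunit
  have hoR : R * Rᵀ = 1 := mul_eq_one_comm.mp ho
  -- R fixes e3
  have hAe3 : A.mulVec e3 = e3 := by
    ext i
    simp [hAdef, aug, Matrix.mulVec, dotProduct, Fin.sum_univ_three, e3]
  have hA'e3 : A'.mulVec e3 = e3 := by
    ext i
    simp [hA'def, aug, Matrix.mulVec, dotProduct, Fin.sum_univ_three, e3]
  have hAie3 : A⁻¹.mulVec e3 = e3 := by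
    conv_lhs => rw [← hAe3]
    rw [Matrix.mulVec_mulVec, Matrix.nonsing_inv_mul A hAunit, Matrix.one_mulVec]
  have hRe3 : R.mulVec e3 = e3 := by
    rw [hRdef, ← Matrix.mulVec_mulVec, hAie3, hA'e3]
  have hRte3 : Rᵀ.mulVec e3 = e3 := by
    conv_lhs => rw [← hRe3]
    rw [Matrix.mulVec_mulVec, ho, Matrix.one_mulVec]
  -- entrywise facts
  have hcol : ∀ i, R i 2 = e3 i := by
    intro i
    have := congrFun hRe3 i
    simpa [Matrix.mulVec, dotProduct, Fin.sum_univ_three, e3] using this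
  have hrow : ∀ j, R 2 j = e3 j := by
    intro j
    have := congrFun hRte3 j
    simpa [Matrix.mulVec, dotProduct, Fin.sum_univ_three, e3] using this
  -- R maps F to F'
  have hRF : R * F = F' := by
    ext i j
    have h0 := congrFun (congrFun hRA i) 0
    have h1 := congrFun (congrFun hRA i) 1
    simp [hAdef, hA'def, Matrix.mul_apply, aug, Fin.sum_univ_three] at h0 h1
    fin_cases j <;> simp [Matrix.mul_apply, Fin.sum_univ_three] <;>
      [exact h0; exact h1]
  -- R commutes with the alternator
  have hcomm : R * altC = altC * R := rot_comm_altC R ho hdR hcol hrow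
  have hcommT : Rᵀ * altC = altC * Rᵀ := by
    calc Rᵀ * altC = Rᵀ * altC * (R * Rᵀ) := by rw [hoR, Matrix.mul_one]
      _ = Rᵀ * (altC * R) * Rᵀ := by simp only [Matrix.mul_assoc]
      _ = Rᵀ * (R * altC) * Rᵀ := by rw [hcomm]
      _ = Rᵀ * R * (altC * Rᵀ) := by simp only [Matrix.mul_assoc]
      _ = altC * Rᵀ := by rw [ho, Matrix.one_mul]
  -- the difference M
  set M := Rᵀ * K' - K with hMdef
  have hFCM : Fᵀ * (altC * M) = 0 := by
    have hF't : F'ᵀ = Fᵀ * Rᵀ := by rw [← hRF, Matrix.transpose_mul]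
    rw [hMdef, Matrix.mul_sub, Matrix.mul_sub]
    have : Fᵀ * (altC * (Rᵀ * K')) = F'ᵀ * altC * K' := by
      rw [hF't]
      calc Fᵀ * (altC * (Rᵀ * K')) = Fᵀ * (altC * Rᵀ * K') := by
            simp only [Matrix.mul_assoc]
        _ = Fᵀ * (Rᵀ * altC * K') := by rw [hcommT]
        _ = Fᵀ * Rᵀ * altC * K' := by simp only [Matrix.mul_assoc]
    rw [this, ← Matrix.mul_assoc, hFK, sub_self]
  -- hence Aᵀ * (altC * M) = 0
  have hAtN : Aᵀ * (altC * M) = 0 := by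
    ext i j
    have h0 := congrFun (congrFun hFCM 0) j
    have h1 := congrFun (congrFun hFCM 1) j
    simp [Matrix.mul_apply, Matrix.vecMul, dotProduct, Fin.sum_univ_three,
      Fin.sum_univ_two, altC] at h0 h1
    fin_cases i <;>
      simp [hAdef, Matrix.mul_apply, Matrix.vecMul, dotProduct, aug, e3,
        Fin.sum_univ_three, altC] <;>
      linarith
  have hN : altC * M = 0 := by
    have h := congrArg (fun X => Aᵀ⁻¹ * X) hAtN
    simpa [← Matrix.mul_assoc, Matrix.nonsing_inv_mul Aᵀ hAtunit] using h
  -- hence the first two rows of M vanish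
  have hM0 : ∀ j, M 0 j = 0 := by
    intro j
    have := congrFun (congrFun hN 1) j
    simpa [Matrix.mul_apply, Fin.sum_univ_three, altC] using this
  have hM1 : ∀ j, M 1 j = 0 := by
    intro j
    have := congrFun (congrFun hN 0) j
    have h' : -(M 1 j) = 0 := by
      simpa [Matrix.mul_apply, Fin.sum_univ_three, altC] using this
    linarith
  -- conclude K' = R * K + vecMulVec e3 t
  set t : Fin 2 → ℝ := fun j => M 2 j with htdef
  have hMv : M = vecMulVec e3 t := by
    ext i j
    fin_cases i <;> simp [Matrix.vecMulVec_apply, e3, htdef, hM0 j, hM1 j]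
  have hK' : K' = R * K + vecMulVec e3 t := by
    have hRM : R * M = K' - R * K := by
      rw [hMdef, Matrix.mul_sub, ← Matrix.mul_assoc, hoR, Matrix.one_mul]
    have hRv : R * vecMulVec e3 t = vecMulVec e3 t := by
      ext i j
      have hc : R i 2 = e3 i := hcol i
      calc (R * vecMulVec e3 t) i j = R i 2 * t j := by
            rw [Matrix.mul_apply]; simp [Matrix.vecMulVec_apply, Fin.sum_univ_three, e3]
        _ = vecMulVec e3 t i j := by rw [hc, Matrix.vecMulVec_apply]
    rw [← hRv, ← hMv, hRM]
    abel
  have := hinv R t F K ho hdR hRe3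
  rw [hRF, ← hK'] at this
  exact this.symm
end

section
/- Let C ∈ Matrix (Fin 3) (Fin 3) ℝ be skew-symmetric (Cᵀ = −C), let A ∈ Matrix (Fin 3) (Fin 2) ℝ be fixed, let E : ℝ → Matrix (Fin 3) (Fin 2) ℝ be differentiable with E'(s) = C (E(s) + A) for all s ∈ ℝ, and let v ∈ ℝ³ satisfy C v = 0. Then the function s ↦ E(s)ᵀ v (the ℝ²-valued function of components vᵀ E(s)) is constant on ℝ. (First integrals U₂ = n⁰E^e and U₄ = n⁰K^e of the characteristic system, since the normal n⁰ annihilates the alternator tensor c.) -/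
open Matrix

/-- if `Cv = 0`, then `s ↦ E(s)ᵀ v` is a first integral of the
characteristic system `dE/ds = C(E+A)` with `C` skew-symmetric. -/
theorem first_integral_U2_U4
    (C : Matrix (Fin 3) (Fin 3) ℝ) (hC : Cᵀ = -C)
    (A : Matrix (Fin 3) (Fin 2) ℝ)
    (E : ℝ → Matrix (Fin 3) (Fin 2) ℝ)
    (hE : ∀ (s : ℝ) (i : Fin 3) (j : Fin 2),
      HasDerivAt (fun u => E u i j) ((C * (E s + A)) i j) s)
    (v : Fin 3 → ℝ) (hv : C.mulVec v = 0) :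
    ∀ s : ℝ, (E s)ᵀ.mulVec v = (E 0)ᵀ.mulVec v := by
  -- vᵀ C = 0 componentwise
  have hvC : ∀ k : Fin 3, ∑ i, v i * C i k = 0 := by
    intro k
    have h := congrFun (congrArg Matrix.mulVec hC) v
    have h2v : Cᵀ.mulVec v = 0 := by
      rw [h, Matrix.neg_mulVec, hv, neg_zero]
    have h2 : Cᵀ.mulVec v k = 0 := congrFun h2v k
    simpa [Matrix.mulVec, dotProduct, Matrix.transpose_apply,
      mul_comm] using h2
  intro s
  funext j
  -- the j-th component as a function of s
  have key : ∀ t : ℝ, HasDerivAt (fun u => ∑ i, v i * E u i j) 0 t := by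
    intro t
    have h1 : HasDerivAt (fun u => ∑ i, v i * E u i j)
        (∑ i, v i * (C * (E t + A)) i j) t := by
      apply HasDerivAt.fun_sum
      intro i _
      exact (hE t i j).const_mul (v i)
    have h2 : (∑ i, v i * (C * (E t + A)) i j) = 0 := by
      simp only [Matrix.mul_apply]
      calc ∑ i, v i * ∑ k, C i k * (E t + A) k j
          = ∑ k, (∑ i, v i * C i k) * (E t + A) k j := by
            simp only [Finset.mul_sum, Finset.sum_mul, mul_assoc]
            rw [Finset.sum_comm]
        _ = 0 := by simp [hvC]
    rwa [h2] at h1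
  have hconst : (∑ i, v i * E s i j) = (∑ i, v i * E 0 i j) := by
    have := is_const_of_deriv_eq_zero (f := fun u => ∑ i, v i * E u i j)
      (fun u => (key u).differentiableAt) (fun u => (key u).deriv) s 0
    simpa using this
  simpa [Matrix.mulVec, dotProduct, Matrix.transpose_apply,
    mul_comm] using hconst
end

section
/- Let C ∈ Matrix (Fin 3) (Fin 3) ℝ be skew-symmetric (Cᵀ = −C), let A, B ∈ Matrix (Fin 3) (Fin 2) ℝ be fixed, and let E, K : ℝ → Matrix (Fin 3) (Fin 2) ℝ be differentiable with E'(s) = C (E(s) + A) and K'(s) = C (K(s) + B) for all s ∈ ℝ. Then the function U₃(s) = (E(s) + A)ᵀ C (K(s) + B) is constant on ℝ. (First integral U₃ of the characteristic system in the proof of the representation theorem.) -/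
open Matrix

lemma key_zero (C : Matrix (Fin 3) (Fin 3) ℝ) (hC : Cᵀ = -C)
    (X Y : Matrix (Fin 3) (Fin 2) ℝ) :
    (C * X)ᵀ * C * Y + Xᵀ * C * (C * Y) = 0 := by
  rw [transpose_mul, hC]
  simp [Matrix.mul_assoc, Matrix.neg_mul, Matrix.mul_neg]

/-- `U₃(s) = (E(s)+A)ᵀ C (K(s)+B)` is a first integral of the coupled
characteristic system `dE/ds = C(E+A)`, `dK/ds = C(K+B)` with `C` skew-symmetric. -/
theorem first_integral_U3
    (C : Matrix (Fin 3) (Fin 3) ℝ) (hC : Cᵀ = -C)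
    (A B : Matrix (Fin 3) (Fin 2) ℝ)
    (E K : ℝ → Matrix (Fin 3) (Fin 2) ℝ)
    (hE : ∀ (s : ℝ) (i : Fin 3) (j : Fin 2),
      HasDerivAt (fun u => E u i j) ((C * (E s + A)) i j) s)
    (hK : ∀ (s : ℝ) (i : Fin 3) (j : Fin 2),
      HasDerivAt (fun u => K u i j) ((C * (K s + B)) i j) s) :
    ∀ s : ℝ, (E s + A)ᵀ * C * (K s + B) = (E 0 + A)ᵀ * C * (K 0 + B) := by
  intro s
  ext i j
  -- the entry function
  set f : ℝ → ℝ := fun u => ((E u + A)ᵀ * C * (K u + B)) i j with hf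
  have hderiv : ∀ t : ℝ, HasDerivAt f 0 t := by
    intro t
    have h1 : ∀ k : Fin 3, HasDerivAt (fun u => E u k i + A k i)
        ((C * (E t + A)) k i) t := fun k => (hE t k i).add_const _
    have h2 : ∀ l : Fin 3, HasDerivAt (fun u => K u l j + B l j)
        ((C * (K t + B)) l j) t := fun l => (hK t l j).add_const _
    have hsum : HasDerivAt
        (fun u => ∑ l : Fin 3, (∑ k : Fin 3, (E u k i + A k i) * C k l) * (K u l j + B l j))
        (∑ l : Fin 3, ((∑ k : Fin 3, (C * (E t + A)) k i * C k l) * (K t l j + B l j)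
          + (∑ k : Fin 3, (E t k i + A k i) * C k l) * (C * (K t + B)) l j)) t := by
      apply HasDerivAt.fun_sum
      intro l _
      exact ((HasDerivAt.fun_sum (fun k _ => (h1 k).mul_const (C k l))).mul (h2 l))
    have hfun : f = fun u =>
        ∑ l : Fin 3, (∑ k : Fin 3, (E u k i + A k i) * C k l) * (K u l j + B l j) := by
      funext u
      simp [hf, Matrix.mul_apply, Matrix.transpose_apply, Matrix.add_apply]
    have hzero : (∑ l : Fin 3, ((∑ k : Fin 3, (C * (E t + A)) k i * C k l) * (K t l j + B l j)
          + (∑ k : Fin 3, (E t k i + A k i) * C k l) * (C * (K t + B)) l j)) = 0 := by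
      have := congrFun (congrFun (key_zero C hC (E t + A) (K t + B)) i) j
      simpa [Matrix.mul_apply, Matrix.transpose_apply, Matrix.add_apply,
        Finset.sum_add_distrib, mul_comm] using this
    rw [hfun]
    rw [← hzero]
    exact hsum
  have hconst : f s = f 0 := by
    have : ∀ t : ℝ, f t = f 0 := by
      intro t
      have h := is_const_of_deriv_eq_zero (f := f)
        (fun u => (hderiv u).differentiableAt) (fun u => (hderiv u).deriv) t 0
      exact h
    exact this s
  simpa [hf] using hconst
end

section
/- Let C ∈ Matrix (Fin 3) (Fin 3) ℝ be skew-symmetric (Cᵀ = −C), let P ∈ Matrix (Fin 3) (Fin 3) ℝ commute with C (P C = C P), let A, B ∈ Matrix (Fin 3) (Fin 2) ℝ be fixed, and let E, K : ℝ → Matrix (Fin 3) (Fin 2) ℝ be differentiable with E'(s) = C (E(s) + A) and K'(s) = C (K(s) + B) for all s ∈ ℝ. Then the function U₅(s) = (E(s) + A)ᵀ P (K(s) + B) is constant on ℝ. (The alternative first integral U₅ of Remark 2, where P plays the role of the first fundamental tensor a of the reference surface.) -/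
open Matrix

/-- `U₅(s) = (E(s)+A)ᵀ P (K(s)+B)` is a first integral of the coupled
characteristic system `dE/ds = C(E+A)`, `dK/ds = C(K+B)` with `C` skew-symmetric,
whenever `P` commutes with `C`. -/
theorem first_integral_U5
    (C P : Matrix (Fin 3) (Fin 3) ℝ) (hC : Cᵀ = -C) (hPC : P * C = C * P)
    (A B : Matrix (Fin 3) (Fin 2) ℝ)
    (E K : ℝ → Matrix (Fin 3) (Fin 2) ℝ)
    (hE : ∀ (s : ℝ) (i : Fin 3) (j : Fin 2),
      HasDerivAt (fun u => E u i j) ((C * (E s + A)) i j) s)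
    (hK : ∀ (s : ℝ) (i : Fin 3) (j : Fin 2),
      HasDerivAt (fun u => K u i j) ((C * (K s + B)) i j) s) :
    ∀ s : ℝ, (E s + A)ᵀ * P * (K s + B) = (E 0 + A)ᵀ * P * (K 0 + B) := by
  intro s
  ext j l
  -- the key algebraic identity: the pointwise derivative vanishes
  have key : ∀ t : ℝ, ∀ k : Fin 3,
      True := fun _ _ => trivial
  have hzero : ∀ t : ℝ,
      ((C * (E t + A))ᵀ * P * (K t + B) + (E t + A)ᵀ * P * (C * (K t + B))) = 0 := by
    intro t
    have h1 : (C * (E t + A))ᵀ * P * (K t + B) + (E t + A)ᵀ * P * (C * (K t + B))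
        = (E t + A)ᵀ * (Cᵀ * P + P * C) * (K t + B) := by
      rw [Matrix.transpose_mul]
      simp only [Matrix.mul_add, Matrix.add_mul, Matrix.mul_assoc]
      abel
    rw [h1, hC, hPC]
    simp [Matrix.neg_mul]
  -- each entry has derivative 0
  have hg : ∀ t : ℝ,
      HasDerivAt (fun u => ((E u + A)ᵀ * P * (K u + B)) j l) 0 t := by
    intro t
    have hterm : ∀ k : Fin 3,
        HasDerivAt (fun u => (∑ i, (E u i j + A i j) * P i k) * (K u k l + B k l))
          ((∑ i, (C * (E t + A)) i j * P i k) * (K t k l + B k l)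
            + (∑ i, (E t i j + A i j) * P i k) * ((C * (K t + B)) k l)) t := by
      intro k
      exact HasDerivAt.mul
        (HasDerivAt.fun_sum (fun i _ => ((hE t i j).add_const (A i j)).mul_const (P i k)))
        ((hK t k l).add_const (B k l))
    have hsum : HasDerivAt
        (fun u => ∑ k, (∑ i, (E u i j + A i j) * P i k) * (K u k l + B k l))
        (∑ k, ((∑ i, (C * (E t + A)) i j * P i k) * (K t k l + B k l)
            + (∑ i, (E t i j + A i j) * P i k) * ((C * (K t + B)) k l))) t :=
      HasDerivAt.fun_sum (fun k _ => hterm k)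
    have expand : (fun u => ((E u + A)ᵀ * P * (K u + B)) j l)
        = fun u => ∑ k, (∑ i, (E u i j + A i j) * P i k) * (K u k l + B k l) := by
      funext u
      simp [Matrix.mul_apply, Matrix.transpose_apply, Matrix.add_apply]
    have expand' :
        ((C * (E t + A))ᵀ * P * (K t + B) + (E t + A)ᵀ * P * (C * (K t + B))) j l
        = ∑ k, ((∑ i, (C * (E t + A)) i j * P i k) * (K t k l + B k l)
            + (∑ i, (E t i j + A i j) * P i k) * ((C * (K t + B)) k l)) := by
      simp [Matrix.mul_apply, Matrix.transpose_apply, Matrix.add_apply,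
        Finset.sum_add_distrib, mul_comm]
    rw [expand]
    have := hsum
    rw [← expand', hzero t] at this
    simpa using this
  have hdiff : Differentiable ℝ (fun u => ((E u + A)ᵀ * P * (K u + B)) j l) :=
    fun t => (hg t).differentiableAt
  exact is_const_of_deriv_eq_zero hdiff (fun t => (hg t).deriv) s 0
end

section
/- Let d₁, d₂ : ℝ² → ℝ³ and θ : ℝ² → ℝ be differentiable, and assume that at every point d₁·d₁ = 1, d₂·d₂ = 1 and d₁·d₂ = 0. Define the rotated directors d₁^θ = (cos θ) d₁ + (sin θ) d₂ and d₂^θ = −(sin θ) d₁ + (cos θ) d₂. Then for every point x ∈ ℝ² and every direction h ∈ ℝ², the directional derivatives satisfy (D_h d₁^θ)(x) · d₂^θ(x) = (D_h d₁)(x) · d₂(x) + (D_h θ)(x). (Key computation in the proof of the representation theorem: superposing a drilling rotation of angle θ shifts the drilling component of the bending–curvature tensor by Grad θ.) -/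
open Matrix

lemma fderiv_dot (f g : (Fin 2 → ℝ) → (Fin 3 → ℝ)) (hf : Differentiable ℝ f)
    (hg : Differentiable ℝ g) (x h : Fin 2 → ℝ) :
    fderiv ℝ (fun y => f y ⬝ᵥ g y) x h
      = fderiv ℝ f x h ⬝ᵥ g x + f x ⬝ᵥ fderiv ℝ g x h := by
  have hfi : ∀ i, HasFDerivAt (fun y => f y i)
      ((ContinuousLinearMap.proj i).comp (fderiv ℝ f x)) x := fun i =>
    (ContinuousLinearMap.proj (R := ℝ) (φ := fun _ : Fin 3 => ℝ) i).hasFDerivAt.comp x (hf x).hasFDerivAt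
  have hgi : ∀ i, HasFDerivAt (fun y => g y i)
      ((ContinuousLinearMap.proj i).comp (fderiv ℝ g x)) x := fun i =>
    (ContinuousLinearMap.proj (R := ℝ) (φ := fun _ : Fin 3 => ℝ) i).hasFDerivAt.comp x (hg x).hasFDerivAt
  have hsum : HasFDerivAt (fun y => f y ⬝ᵥ g y)
      (∑ i, (f x i • (ContinuousLinearMap.proj i).comp (fderiv ℝ g x)
        + g x i • (ContinuousLinearMap.proj i).comp (fderiv ℝ f x))) x := by
    have := HasFDerivAt.fun_sum (fun i (_ : i ∈ Finset.univ) => ((hfi i).mul (hgi i)))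
    simpa [dotProduct] using this
  rw [hsum.fderiv]
  simp [dotProduct, Finset.sum_add_distrib, mul_comm]
  exact add_comm _ _

/-- superposing a drilling rotation of angle `θ` shifts the drilling
component of the bending–curvature tensor by `Grad θ`:
`(D_h d₁^θ)·d₂^θ = (D_h d₁)·d₂ + D_h θ`. -/
theorem drilling_component_shift
    (d₁ d₂ : (Fin 2 → ℝ) → (Fin 3 → ℝ)) (θ : (Fin 2 → ℝ) → ℝ)
    (hd₁ : Differentiable ℝ d₁) (hd₂ : Differentiable ℝ d₂)
    (hθ : Differentiable ℝ θ)
    (h11 : ∀ x, d₁ x ⬝ᵥ d₁ x = 1)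
    (h22 : ∀ x, d₂ x ⬝ᵥ d₂ x = 1)
    (h12 : ∀ x, d₁ x ⬝ᵥ d₂ x = 0) :
    ∀ (x h : Fin 2 → ℝ),
      fderiv ℝ (fun y => Real.cos (θ y) • d₁ y + Real.sin (θ y) • d₂ y) x h ⬝ᵥ
          (-(Real.sin (θ x)) • d₁ x + Real.cos (θ x) • d₂ x)
        = fderiv ℝ d₁ x h ⬝ᵥ d₂ x + fderiv ℝ θ x h := by
  intro x h
  -- derivative identities from orthonormality
  have e11 : fderiv ℝ d₁ x h ⬝ᵥ d₁ x + d₁ x ⬝ᵥ fderiv ℝ d₁ x h = 0 := by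
    have hc : (fun y => d₁ y ⬝ᵥ d₁ y) = fun _ : Fin 2 → ℝ => (1 : ℝ) := funext h11
    have := fderiv_dot d₁ d₁ hd₁ hd₁ x h
    rw [hc, fderiv_fun_const] at this
    simp only [Pi.zero_apply, ContinuousLinearMap.zero_apply] at this
    linarith [this]
  have e22 : fderiv ℝ d₂ x h ⬝ᵥ d₂ x + d₂ x ⬝ᵥ fderiv ℝ d₂ x h = 0 := by
    have hc : (fun y => d₂ y ⬝ᵥ d₂ y) = fun _ : Fin 2 → ℝ => (1 : ℝ) := funext h22
    have := fderiv_dot d₂ d₂ hd₂ hd₂ x h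
    rw [hc, fderiv_fun_const] at this
    simp only [Pi.zero_apply, ContinuousLinearMap.zero_apply] at this
    linarith [this]
  have e12 : fderiv ℝ d₁ x h ⬝ᵥ d₂ x + d₁ x ⬝ᵥ fderiv ℝ d₂ x h = 0 := by
    have hc : (fun y => d₁ y ⬝ᵥ d₂ y) = fun _ : Fin 2 → ℝ => (0 : ℝ) := funext h12
    have := fderiv_dot d₁ d₂ hd₁ hd₂ x h
    rw [hc, fderiv_fun_const] at this
    simp only [Pi.zero_apply, ContinuousLinearMap.zero_apply] at this
    linarith [this]
  -- derivative of the rotated director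
  have hcos : HasFDerivAt (fun y => Real.cos (θ y))
      (-Real.sin (θ x) • fderiv ℝ θ x) x := (hθ x).hasFDerivAt.cos
  have hsin : HasFDerivAt (fun y => Real.sin (θ y))
      (Real.cos (θ x) • fderiv ℝ θ x) x := (hθ x).hasFDerivAt.sin
  have hF : HasFDerivAt (fun y => Real.cos (θ y) • d₁ y + Real.sin (θ y) • d₂ y)
      ((Real.cos (θ x) • fderiv ℝ d₁ x
          + (-Real.sin (θ x) • fderiv ℝ θ x).smulRight (d₁ x))
        + (Real.sin (θ x) • fderiv ℝ d₂ x
          + (Real.cos (θ x) • fderiv ℝ θ x).smulRight (d₂ x))) x :=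
    (hcos.smul (hd₁ x).hasFDerivAt).add (hsin.smul (hd₂ x).hasFDerivAt)
  rw [hF.fderiv]
  set s := Real.sin (θ x) with hs
  set c := Real.cos (θ x) with hcdef
  set D1 := fderiv ℝ d₁ x h with hD1
  set D2 := fderiv ℝ d₂ x h with hD2
  set t := fderiv ℝ θ x h with ht
  have hsc : s ^ 2 + c ^ 2 = 1 := Real.sin_sq_add_cos_sq (θ x)
  have hA1 : D1 ⬝ᵥ d₁ x = 0 := by
    have := dotProduct_comm (d₁ x) D1; linarith [e11]
  have hA2 : D2 ⬝ᵥ d₂ x = 0 := by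
    have := dotProduct_comm (d₂ x) D2; linarith [e22]
  have hB : d₁ x ⬝ᵥ D2 = -(D1 ⬝ᵥ d₂ x) := by linarith [e12]
  simp only [ContinuousLinearMap.add_apply, ContinuousLinearMap.smul_apply,
    ContinuousLinearMap.smulRight_apply, ContinuousLinearMap.neg_apply,
    Pi.smul_apply, smul_eq_mul, neg_smul, Pi.neg_apply,
    add_dotProduct, neg_dotProduct, smul_dotProduct, dotProduct_add,
    dotProduct_neg, dotProduct_smul, ← hs, ← hcdef, ← hD1, ← hD2, ← ht]
  rw [dotProduct_comm (d₂ x) (d₁ x), dotProduct_comm (D2) (d₁ x)] at *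
  rw [hA1, hA2, hB, h11 x, h22 x, h12 x]
  linear_combination (D1 ⬝ᵥ d₂ x + t) * hsc
end

section
/- Let α₁, α₂, α₃, α₄, β₁, β₂, β₃, β₄ ∈ ℝ satisfy 2α₁+α₂+α₃ > 0, α₂+α₃ > 0, α₃−α₂ > 0, α₄ > 0, 2β₁+β₂+β₃ > 0, β₂+β₃ > 0, β₃−β₂ > 0, β₄ > 0. Then there exists a constant Cc > 0 such that for all E, K ∈ Matrix (Fin 2) (Fin 2) ℝ and all e, k ∈ ℝ²: α₁(trace E)² + α₂ trace(E²) + α₃ ‖E‖² + α₄ ‖e‖² + β₁(trace K)² + β₂ trace(K²) + β₃ ‖K‖² + β₄ ‖k‖² ≥ Cc (‖E‖² + ‖e‖² + ‖K‖² + ‖k‖²). (Coercivity of the quadratic strain energy (38) of a physically linear isotropic 6-parameter shell under the conditions (39).) -/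
open Matrix

/-- Squared Frobenius norm `‖X‖² = tr(XᵀX)`. -/
def frobSq (X : Matrix (Fin 2) (Fin 2) ℝ) : ℝ := trace (Xᵀ * X)

lemma block_bound (α₁ α₂ α₃ m : ℝ)
    (hp1 : 0 < 2 * α₁ + α₂ + α₃) (hp2 : 0 < α₂ + α₃) (hp3 : 0 < α₃ - α₂)
    (h1 : m ≤ (2 * α₁ + α₂ + α₃) / 2) (h2 : m ≤ (α₂ + α₃) / 2)
    (h3 : m ≤ (α₃ - α₂) / 2) (a b c d : ℝ) :
    α₁ * (a + d) ^ 2 + α₂ * (a ^ 2 + d ^ 2 + 2 * (b * c))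
      + α₃ * (a ^ 2 + b ^ 2 + c ^ 2 + d ^ 2)
      ≥ m * (a ^ 2 + b ^ 2 + c ^ 2 + d ^ 2) := by
  have t1 := mul_nonneg (by linarith : (0:ℝ) ≤ 2 * α₁ + α₂ + α₃ - m) (sq_nonneg (a + d))
  have t2 := mul_nonneg (by linarith : (0:ℝ) ≤ α₂ + α₃ - m) (sq_nonneg (a - d))
  have t3 := mul_nonneg (by linarith : (0:ℝ) ≤ α₂ + α₃ - m) (sq_nonneg (b + c))
  have t4 := mul_nonneg (by linarith : (0:ℝ) ≤ α₃ - α₂ - m) (sq_nonneg (b - c))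
  nlinarith [t1, t2, t3, t4]

/-- coercivity of the quadratic strain energy (38) of a physically
linear isotropic 6-parameter shell under the positivity conditions (39). -/
theorem strain_energy_coercive
    (α₁ α₂ α₃ α₄ β₁ β₂ β₃ β₄ : ℝ)
    (ha1 : 0 < 2 * α₁ + α₂ + α₃) (ha2 : 0 < α₂ + α₃) (ha3 : 0 < α₃ - α₂)
    (ha4 : 0 < α₄)
    (hb1 : 0 < 2 * β₁ + β₂ + β₃) (hb2 : 0 < β₂ + β₃) (hb3 : 0 < β₃ - β₂)
    (hb4 : 0 < β₄) :
    ∃ Cc : ℝ, 0 < Cc ∧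
      ∀ (E K : Matrix (Fin 2) (Fin 2) ℝ) (e k : Fin 2 → ℝ),
        α₁ * (trace E) ^ 2 + α₂ * trace (E * E) + α₃ * frobSq E + α₄ * (e ⬝ᵥ e)
          + β₁ * (trace K) ^ 2 + β₂ * trace (K * K) + β₃ * frobSq K + β₄ * (k ⬝ᵥ k)
        ≥ Cc * (frobSq E + e ⬝ᵥ e + frobSq K + k ⬝ᵥ k) := by
  refine ⟨min (min (min ((2 * α₁ + α₂ + α₃) / 2) ((α₂ + α₃) / 2))
      (min ((α₃ - α₂) / 2) α₄))
      (min (min ((2 * β₁ + β₂ + β₃) / 2) ((β₂ + β₃) / 2))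
      (min ((β₃ - β₂) / 2) β₄)), ?_, ?_⟩
  · simp only [lt_min_iff]
    refine ⟨⟨⟨?_, ?_⟩, ?_, ?_⟩, ⟨?_, ?_⟩, ?_, ?_⟩ <;> linarith
  · intro E K e k
    set m := min (min (min ((2 * α₁ + α₂ + α₃) / 2) ((α₂ + α₃) / 2))
      (min ((α₃ - α₂) / 2) α₄))
      (min (min ((2 * β₁ + β₂ + β₃) / 2) ((β₂ + β₃) / 2))
      (min ((β₃ - β₂) / 2) β₄)) with hm
    have hma1 : m ≤ (2 * α₁ + α₂ + α₃) / 2 := le_trans (min_le_left _ _)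
      (le_trans (min_le_left _ _) (min_le_left _ _))
    have hma2 : m ≤ (α₂ + α₃) / 2 := le_trans (min_le_left _ _)
      (le_trans (min_le_left _ _) (min_le_right _ _))
    have hma3 : m ≤ (α₃ - α₂) / 2 := le_trans (min_le_left _ _)
      (le_trans (min_le_right _ _) (min_le_left _ _))
    have hma4 : m ≤ α₄ := le_trans (min_le_left _ _)
      (le_trans (min_le_right _ _) (min_le_right _ _))
    have hmb1 : m ≤ (2 * β₁ + β₂ + β₃) / 2 := le_trans (min_le_right _ _)
      (le_trans (min_le_left _ _) (min_le_left _ _))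
    have hmb2 : m ≤ (β₂ + β₃) / 2 := le_trans (min_le_right _ _)
      (le_trans (min_le_left _ _) (min_le_right _ _))
    have hmb3 : m ≤ (β₃ - β₂) / 2 := le_trans (min_le_right _ _)
      (le_trans (min_le_right _ _) (min_le_left _ _))
    have hmb4 : m ≤ β₄ := le_trans (min_le_right _ _)
      (le_trans (min_le_right _ _) (min_le_right _ _))
    have hE := block_bound α₁ α₂ α₃ m ha1 ha2 ha3 hma1 hma2 hma3
      (E 0 0) (E 0 1) (E 1 0) (E 1 1)
    have hK := block_bound β₁ β₂ β₃ m hb1 hb2 hb3 hmb1 hmb2 hmb3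
      (K 0 0) (K 0 1) (K 1 0) (K 1 1)
    have he : α₄ * (e 0 ^ 2 + e 1 ^ 2) ≥ m * (e 0 ^ 2 + e 1 ^ 2) := by
      nlinarith [sq_nonneg (e 0), sq_nonneg (e 1)]
    have hk : β₄ * (k 0 ^ 2 + k 1 ^ 2) ≥ m * (k 0 ^ 2 + k 1 ^ 2) := by
      nlinarith [sq_nonneg (k 0), sq_nonneg (k 1)]
    simp only [frobSq, Matrix.trace_fin_two, Matrix.mul_apply, Fin.sum_univ_two,
      Matrix.transpose_apply, dotProduct] at *
    linarith [hE, hK, he, hk]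
end

section
/- Let C > 0, D > 0, κ ≥ 0, −1 < ν < 1/2, and define α₁ = Cν, α₂ = α₃ = C(1−ν)/2, α₄ = C(1−ν)κ/2, β₁ = −D(1−ν)/2, β₂ = −Dν, β₃ = D, β₄ = 0. Then the quadratic form Q(E, e, K, k) = α₁(trace E)² + α₂ trace(E²) + α₃ ‖E‖² + α₄ ‖e‖² + β₁(trace K)² + β₂ trace(K²) + β₃ ‖K‖² + β₄ ‖k‖² is not positive definite: there exists (E, e, K, k) ≠ 0 with Q(E, e, K, k) = 0; in particular Q(!![0,1;-1,0], 0, 0, 0) = 0. (Remark 5: for shells without drilling rotations, α₃ − α₂ = 0, 2β₁ + β₂ + β₃ = 0 and β₄ = 0, so the strain energy (46) is only positive semi-definite and the existence theorem for 6-parameter shells does not apply.) -/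
open Matrix

/-- Twice the strain energy density (46) with the no-drill coefficients (47):
`α₁ = Cν`, `α₂ = α₃ = C(1−ν)/2`, `α₄ = C(1−ν)κ/2`, `β₁ = −D(1−ν)/2`, `β₂ = −Dν`,
`β₃ = D`, `β₄ = 0`. -/
noncomputable def Qform (C D κ ν : ℝ) (E : Matrix (Fin 2) (Fin 2) ℝ) (e : Fin 2 → ℝ)
    (K : Matrix (Fin 2) (Fin 2) ℝ) (k : Fin 2 → ℝ) : ℝ :=
  (C * ν) * (trace E) ^ 2 + (C * (1 - ν) / 2) * trace (E * E)
    + (C * (1 - ν) / 2) * frobSq E + (C * (1 - ν) * κ / 2) * (e ⬝ᵥ e)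
    + (-(D * (1 - ν) / 2)) * (trace K) ^ 2 + (-(D * ν)) * trace (K * K)
    + D * frobSq K + (0 : ℝ) * (k ⬝ᵥ k)

lemma Qform_witness (C D κ ν : ℝ) :
    Qform C D κ ν !![0, 1; -1, 0] 0 0 0 = 0 := by
  simp [Qform, frobSq, trace_fin_two, Matrix.mul_apply, Fin.sum_univ_two, Matrix.transpose_apply, Matrix.vecHead, Matrix.vecTail]
  ring

/-- Remark 5: the no-drill quadratic strain energy is not positive
definite: it vanishes on a nonzero configuration, in particular on
`(E, e, K, k) = (!![0,1;-1,0], 0, 0, 0)`. -/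
theorem no_drill_energy_not_positive_definite
    (C D κ ν : ℝ) (hC : 0 < C) (hD : 0 < D) (hκ : 0 ≤ κ)
    (hν₁ : -1 < ν) (hν₂ : ν < 1 / 2) :
    (∃ (E : Matrix (Fin 2) (Fin 2) ℝ) (e : Fin 2 → ℝ)
        (K : Matrix (Fin 2) (Fin 2) ℝ) (k : Fin 2 → ℝ),
      ¬(E = 0 ∧ e = 0 ∧ K = 0 ∧ k = 0) ∧ Qform C D κ ν E e K k = 0) ∧
    Qform C D κ ν !![0, 1; -1, 0] 0 0 0 = 0 := by
  refine ⟨⟨!![0, 1; -1, 0], 0, 0, 0, ?_, Qform_witness C D κ ν⟩, Qform_witness C D κ ν⟩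
  intro ⟨hE, _⟩
  have := congrFun (congrFun hE 0) 1
  simp at this
end

section
/- Let P = 1 − e₃ e₃ᵀ ∈ Matrix (Fin 3) (Fin 3) ℝ be the orthogonal projection onto the plane e₃⊥. For all F, K ∈ Matrix (Fin 3) (Fin 2) ℝ, every special orthogonal R ∈ Matrix (Fin 3) (Fin 3) ℝ with R e₃ = e₃, and every t ∈ ℝ²: (R F)ᵀ (R F) = Fᵀ F, (R F)ᵀ e₃ = Fᵀ e₃, and (R F)ᵀ P (R K + e₃ tᵀ) = Fᵀ P K. Consequently, any strain energy of the form W(F, K) = W̄(Fᵀ F, Fᵀ e₃, Fᵀ P K) is invariant under superposed drilling rotations. (Remark 2 of the paper: the alternative representation W = W̄(FᵀF, Fᵀd₃, Fᵀ(d₃ × Grad_s d₃)) based on the first integral U₅ and Zhilin's bending–twist tensor.) -/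
open Matrix

/-- The orthogonal projection `P = 1 − e₃e₃ᵀ` onto the plane `e₃⊥`. -/
def projP : Matrix (Fin 3) (Fin 3) ℝ := 1 - vecMulVec e3 e3

lemma mul_vecMulVec (A : Matrix (Fin 3) (Fin 3) ℝ) (u : Fin 3 → ℝ) (v : Fin 2 → ℝ) :
    A * vecMulVec u v = vecMulVec (A.mulVec u) v := by
  ext i j
  simp only [mul_apply, vecMulVec_apply, mulVec, dotProduct]
  rw [Finset.sum_mul]
  exact Finset.sum_congr rfl fun k _ => (mul_assoc _ _ _).symm

lemma mul_vecMulVec' (A : Matrix (Fin 3) (Fin 3) ℝ) (u v : Fin 3 → ℝ) :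
    A * vecMulVec u v = vecMulVec (A.mulVec u) v := by
  ext i j
  simp only [mul_apply, vecMulVec_apply, mulVec, dotProduct]
  rw [Finset.sum_mul]
  exact Finset.sum_congr rfl fun k _ => (mul_assoc _ _ _).symm

lemma vecMulVec_mul (u v : Fin 3 → ℝ) (A : Matrix (Fin 3) (Fin 3) ℝ) :
    vecMulVec u v * A = vecMulVec u (vecMul v A) := by
  ext i j
  simp only [mul_apply, vecMulVec_apply, vecMul, dotProduct]
  rw [Finset.mul_sum]
  exact Finset.sum_congr rfl fun k _ => mul_assoc _ _ _

lemma projP_mul_e3t (t : Fin 2 → ℝ) : projP * vecMulVec e3 t = 0 := by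
  rw [projP, Matrix.sub_mul, Matrix.one_mul]
  have h2 : vecMulVec e3 e3 * vecMulVec e3 t = vecMulVec e3 t := by
    ext i j
    simp only [mul_apply, vecMulVec_apply, Fin.sum_univ_three]
    simp [e3]
  rw [h2, sub_self]


/-- Remark 2: invariance of `FᵀF`, `Fᵀe₃` and `FᵀPK` under superposed
drilling rotations; hence any energy `W(F,K) = W̄(FᵀF, Fᵀe₃, FᵀPK)` is invariant. -/
theorem drilling_invariants_alternative
    (W : Matrix (Fin 3) (Fin 2) ℝ → Matrix (Fin 3) (Fin 2) ℝ → ℝ)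
    (Wbar : Matrix (Fin 2) (Fin 2) ℝ → (Fin 2 → ℝ) → Matrix (Fin 2) (Fin 2) ℝ → ℝ)
    (hW : ∀ F K : Matrix (Fin 3) (Fin 2) ℝ,
      W F K = Wbar (Fᵀ * F) (Fᵀ.mulVec e3) (Fᵀ * projP * K)) :
    ∀ (F K : Matrix (Fin 3) (Fin 2) ℝ) (R : Matrix (Fin 3) (Fin 3) ℝ)
      (t : Fin 2 → ℝ),
      Rᵀ * R = 1 → R.det = 1 → R.mulVec e3 = e3 →
      (R * F)ᵀ * (R * F) = Fᵀ * F ∧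
      (R * F)ᵀ.mulVec e3 = Fᵀ.mulVec e3 ∧
      (R * F)ᵀ * projP * (R * K + vecMulVec e3 t) = Fᵀ * projP * K ∧
      W (R * F) (R * K + vecMulVec e3 t) = W F K := by
  intro F K R t hR _ hRe3
  have hRTe3 : Rᵀ.mulVec e3 = e3 := by
    conv_lhs => rw [← hRe3]
    rw [mulVec_mulVec, hR, one_mulVec]
  have h1 : (R * F)ᵀ * (R * F) = Fᵀ * F := by
    rw [transpose_mul, Matrix.mul_assoc, ← Matrix.mul_assoc Rᵀ, hR, Matrix.one_mul]
  have h2 : (R * F)ᵀ.mulVec e3 = Fᵀ.mulVec e3 := by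
    rw [transpose_mul, ← mulVec_mulVec, hRTe3]
  have hPR : Rᵀ * projP * R = projP := by
    rw [projP, mul_sub, sub_mul, mul_one, hR, mul_vecMulVec', hRTe3, vecMulVec_mul]
    congr 1
    rw [mulVec_transpose] at hRTe3
    rw [hRTe3]
  have h3 : (R * F)ᵀ * projP * (R * K + vecMulVec e3 t) = Fᵀ * projP * K := by
    rw [transpose_mul, Matrix.mul_add]
    have ha : Fᵀ * Rᵀ * projP * (R * K) = Fᵀ * projP * K := by
      rw [show Fᵀ * Rᵀ * projP * (R * K) = Fᵀ * (Rᵀ * projP * R) * K by simp only [Matrix.mul_assoc], hPR]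
    have hb : Fᵀ * Rᵀ * projP * vecMulVec e3 t = 0 := by
      rw [Matrix.mul_assoc, projP_mul_e3t, Matrix.mul_zero]
    rw [ha, hb, add_zero]
  refine ⟨h1, h2, h3, ?_⟩
  rw [hW, hW, h1, h2, h3]
end
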